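/- Let n ≥ 1 and let σ be a congruence on P_n^Φ. For 0 ≤ q ≤ n define θ_q := {(i,j) ∈ ℕ × ℕ : ((i,α),(j,α)) ∈ σ for some α ∈ D_q}. Then θ_q = {(i,j) ∈ ℕ × ℕ : ((i,α),(j,α)) ∈ σ for all α ∈ D_q}, each θ_q is a congruence on the additive monoid (ℕ,+), and θ_0 ⊇ θ_1 ⊇ ⋯ ⊇ θ_n. -/

import Mathlib

namespace TPM

/-- Vertex set `{1,…,n} ∪ {1',…,n'}`: `Sum.inl` = unprimed (upper row),
`Sum.inr` = primed (lower row). -/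
abbrev V (n : ℕ) := Fin n ⊕ Fin n

/-- The partition monoid `P_n`: set partitions of the `2n`-element set `V n`,
encoded as equivalence relations (setoids). -/
abbrev PM (n : ℕ) := Setoid (V n)

/-- Three-row vertex set of the product graph: top / middle / bottom. -/
abbrev W (n : ℕ) := Fin n ⊕ (Fin n ⊕ Fin n)

variable {n : ℕ}

/-- First factor: unprimed ↦ top, primed ↦ middle. -/
def topMid : V n → W n
  | Sum.inl i => Sum.inl i
  | Sum.inr i => Sum.inr (Sum.inl i)

/-- Second factor: unprimed ↦ middle, primed ↦ bottom. -/
def midBot : V n → W n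
  | Sum.inl i => Sum.inr (Sum.inl i)
  | Sum.inr i => Sum.inr (Sum.inr i)

/-- Embedding of `V n` as top and bottom rows of the three-row set. -/
def topBot : V n → W n
  | Sum.inl i => Sum.inl i
  | Sum.inr i => Sum.inr (Sum.inr i)

/-- Edge relation of the product graph `Γ(α,β)`. -/
def graphRel (α β : PM n) (x y : W n) : Prop :=
  (∃ u v : V n, α.r u v ∧ x = topMid u ∧ y = topMid v) ∨
  (∃ u v : V n, β.r u v ∧ x = midBot u ∧ y = midBot v)

/-- Connectivity (equivalence closure of the edge relation) in `Γ(α,β)`. -/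
def conn (α β : PM n) : W n → W n → Prop := Relation.EqvGen (graphRel α β)

/-- Connectivity in `Γ(α,β)`, as a setoid on the three-row vertex set. -/
def connSetoid (α β : PM n) : Setoid (W n) :=
  ⟨conn α β, Relation.EqvGen.is_equivalence _⟩

/-- The product of two partitions: `x,y` lie in the same block of `αβ` iff they are
connected in `Γ(α,β)`. -/
def pmul (α β : PM n) : PM n :=
  ⟨fun x y => conn α β (topBot x) (topBot y),
    ⟨fun _ => Relation.EqvGen.refl _, fun h => Relation.EqvGen.symm _ _ h, fun h h' => Relation.EqvGen.trans _ _ _ h h'⟩⟩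

/-- A vertex of the three-row set lies in the middle row. -/
def isMid (x : W n) : Prop := ∃ i : Fin n, x = Sum.inr (Sum.inl i)

/-- `Φ(α,β)`: the number of floating components of `Γ(α,β)`, i.e. connected components
all of whose vertices lie in the middle row. -/
noncomputable def Phi (α β : PM n) : ℕ :=
  Nat.card {c : Quotient (connSetoid α β) //
    ∀ x : W n, Quotient.mk (connSetoid α β) x = c → isMid x}

/-- The rank of a partition: the number of transversal blocks (blocks containing both an
unprimed and a primed element). -/
noncomputable def rnk (α : PM n) : ℕ :=
  Nat.card {c : Quotient α //
    (∃ i : Fin n, Quotient.mk α (Sum.inl i) = c) ∧ ∃ i : Fin n, Quotient.mk α (Sum.inr i) = c}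

/-- Which row of `V n` a point lies in. -/
def side : V n → Bool
  | Sum.inl _ => true
  | Sum.inr _ => false

/-- `α̂`: split each transversal of `α` into its unprimed part and its primed part. -/
def hat (α : PM n) : PM n :=
  ⟨fun x y => α.r x y ∧ side x = side y,
    ⟨fun x => ⟨α.iseqv.refl x, rfl⟩,
     fun h => ⟨α.iseqv.symm h.1, h.2.symm⟩,
     fun h h' => ⟨α.iseqv.trans h.1 h'.1, h.2.trans h'.2⟩⟩⟩

/-- The twisted product on `ℕ × P_n`:  `(i,α)(j,β) = (i + j + Φ(α,β), αβ)`. -/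
noncomputable def tmul (a b : ℕ × PM n) : ℕ × PM n :=
  (a.1 + b.1 + Phi a.2 b.2, pmul a.2 b.2)

/-- A congruence on a set equipped with a binary operation: an equivalence relation
compatible with the operation on both sides. -/
def IsCongruence {M : Type*} (mul : M → M → M) (σ : M → M → Prop) : Prop :=
  Equivalence σ ∧ ∀ x y a, σ x y → σ (mul a x) (mul a y) ∧ σ (mul x a) (mul y a)

/-- Green's relation `R`: equality of the right ideals `xM = yM`. -/
def greenR {M : Type*} (mul : M → M → M) (x y : M) : Prop :=
  Set.range (mul x) = Set.range (mul y)

/-- Green's relation `L`: `Mx = My`. -/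
def greenL {M : Type*} (mul : M → M → M) (x y : M) : Prop :=
  Set.range (fun a => mul a x) = Set.range (fun a => mul a y)

/-- The principal two-sided ideal `MxM`. -/
def jSet {M : Type*} (mul : M → M → M) (x : M) : Set M :=
  Set.range (fun p : M × M => mul (mul p.1 x) p.2)

/-- Green's relation `J`: `MxM = MyM`. -/
def greenJ {M : Type*} (mul : M → M → M) (x y : M) : Prop :=
  jSet mul x = jSet mul y

/-- Green's relation `H = R ∩ L`. -/
def greenH {M : Type*} (mul : M → M → M) (x y : M) : Prop :=
  greenR mul x y ∧ greenL mul x y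

/-- Green's relation `D = R ∘ L`. -/
def greenD {M : Type*} (mul : M → M → M) (x y : M) : Prop :=
  ∃ z, greenR mul x z ∧ greenL mul z y

/-- `pd(α,β)` satisfies `P`, where `α` has `p` transversals: there are representatives
`a s` of the upper parts of the `p` (pairwise distinct) transversals of `α`, with `b s`
representing the corresponding lower parts, and a permutation `π` with `P π` such that the
block of `β` containing `a s` contains `b (π s)`.  (For H-related `α, β ∈ D_p` this says
exactly that some representation of the permutational difference `pd(α,β)` satisfies `P`.) -/
def pdIn (p : ℕ) (P : Equiv.Perm (Fin p) → Prop) (α β : PM n) : Prop :=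
  ∃ (a b : Fin p → Fin n) (π : Equiv.Perm (Fin p)),
    (∀ s t, α.r (Sum.inl (a s)) (Sum.inl (a t)) → s = t) ∧
    (∀ s, α.r (Sum.inl (a s)) (Sum.inr (b s))) ∧
    (∀ s, β.r (Sum.inl (a s)) (Sum.inr (b (π s)))) ∧
    P π

/-- The relation `ν_N` on `D_p`, for a subgroup `N ≤ S_p`:  H-related pairs of rank-`p`
partitions whose permutational difference lies in `N`. -/
def nuRel (p : ℕ) (N : Subgroup (Equiv.Perm (Fin p))) (α β : PM n) : Prop :=
  rnk α = p ∧ rnk β = p ∧ greenH pmul α β ∧ pdIn p (· ∈ N) α β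

/-- The congruence `(m, m+d)^♯` on the additive monoid `ℕ` (intended for `d ≥ 1`). -/
def natCong (m d : ℕ) (i j : ℕ) : Prop :=
  i = j ∨ (m ≤ i ∧ m ≤ j ∧ i % d = j % d)

/-- `min θ ≤ i` for a congruence `θ` on `ℕ` (with `min Δ_ℕ = ∞`). -/
def minLE (θ : ℕ → ℕ → Prop) (i : ℕ) : Prop :=
  ∃ a b, θ a b ∧ a ≠ b ∧ a ≤ i

/-- `k ≤ min θ` for a congruence `θ` on `ℕ` (with `min Δ_ℕ = ∞`). -/
def leMin (k : ℕ) (θ : ℕ → ℕ → Prop) : Prop :=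
  ∀ a b, θ a b → a ≠ b → k ≤ a

/-- The possible entries of a C-matrix. -/
inductive CEntry : Type
  | delta | muUp | muDown | mu | lam | rho | R
  | nsym (q : ℕ) (N : Subgroup (Equiv.Perm (Fin q)))

/-- Whether a C-matrix entry is an N-symbol. -/
def isNsym : CEntry → Prop
  | CEntry.nsym _ _ => True
  | _ => False

/-- The allowed values of the symbol `ζ` in row types RT2, RT5, RT6. -/
def isZeta (e : CEntry) : Prop :=
  e = CEntry.mu ∨ e = CEntry.muUp ∨ e = CEntry.muDown ∨ e = CEntry.delta

/-- The allowed values of the symbol `ξ` in row types RT4–RT7: any of `μ,ρ,λ,R` if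
`d = 1`, and only `μ` if `d > 1`. -/
def xiOK (d : ℕ) (e : CEntry) : Prop :=
  e = CEntry.mu ∨ (d = 1 ∧ (e = CEntry.rho ∨ e = CEntry.lam ∨ e = CEntry.R))

/-- Row type RT1 for rows 0 and 1: all entries `Δ`. -/
def RT1 (M0 M1 : ℕ → CEntry) : Prop :=
  (∀ i, M0 i = CEntry.delta) ∧ (∀ i, M1 i = CEntry.delta)

/-- Row type RT2. -/
def RT2 (Θ0 Θ1 : ℕ → ℕ → Prop) (M0 M1 : ℕ → CEntry) : Prop :=
  Θ0 = Eq ∧ Θ1 = Eq ∧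
  ∃ i ζ, isZeta ζ ∧
    (∀ j, j < i → M0 j = CEntry.delta) ∧ (∀ j, i ≤ j → M0 j = CEntry.mu) ∧
    (∀ j, j < i → M1 j = CEntry.delta) ∧ M1 i = ζ ∧ (∀ j, i < j → M1 j = CEntry.mu)

/-- Row type RT3. -/
def RT3 (Θ0 : ℕ → ℕ → Prop) (M0 M1 : ℕ → CEntry) : Prop :=
  ∃ m ξ, Θ0 = natCong m 1 ∧ (ξ = CEntry.rho ∨ ξ = CEntry.lam ∨ ξ = CEntry.R) ∧
    (∀ i, M1 i = CEntry.delta) ∧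
    (∀ j, j < m → M0 j = CEntry.delta) ∧ (∀ j, m ≤ j → M0 j = ξ)

/-- Row type RT4. -/
def RT4 (Θ0 Θ1 : ℕ → ℕ → Prop) (M0 M1 : ℕ → CEntry) : Prop :=
  ∃ m d ξ, 1 ≤ d ∧ Θ0 = natCong m d ∧ Θ1 = natCong m d ∧ xiOK d ξ ∧
    (∀ j, j < m → M0 j = CEntry.delta ∧ M1 j = CEntry.delta) ∧
    (∀ j, m ≤ j → M0 j = ξ ∧ M1 j = ξ)

/-- Row type RT5. -/
def RT5 (Θ0 Θ1 : ℕ → ℕ → Prop) (M0 M1 : ℕ → CEntry) : Prop :=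
  ∃ m d i ξ ζ, 1 ≤ d ∧ i < m ∧ Θ0 = natCong m d ∧ Θ1 = natCong (m + 1) d ∧
    xiOK d ξ ∧ isZeta ζ ∧
    (∀ j, j < i → M0 j = CEntry.delta) ∧ (∀ j, i ≤ j → j < m → M0 j = CEntry.mu) ∧
    (∀ j, m ≤ j → M0 j = ξ) ∧
    (∀ j, j < i → M1 j = CEntry.delta) ∧ M1 i = ζ ∧
    (∀ j, i < j → j ≤ m → M1 j = CEntry.mu) ∧ (∀ j, m < j → M1 j = ξ)

/-- Row type RT6. -/
def RT6 (Θ0 Θ1 : ℕ → ℕ → Prop) (M0 M1 : ℕ → CEntry) : Prop :=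
  ∃ m l d ξ ζ, 1 ≤ d ∧ m < l ∧ Θ0 = natCong m d ∧ Θ1 = natCong l d ∧
    xiOK d ξ ∧ isZeta ζ ∧
    (∀ j, j < m → M0 j = CEntry.delta) ∧ (∀ j, m ≤ j → M0 j = ξ) ∧
    (∀ j, j < l - 1 → M1 j = CEntry.delta) ∧ M1 (l - 1) = ζ ∧ (∀ j, l ≤ j → M1 j = ξ)

/-- Row type RT7. -/
def RT7 (Θ0 Θ1 : ℕ → ℕ → Prop) (M0 M1 : ℕ → CEntry) : Prop :=
  ∃ m l d ξ, 1 ≤ d ∧ 0 < m ∧ m + 1 < l ∧ (l - 1) % d = m % d ∧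
    Θ0 = natCong m d ∧ Θ1 = natCong l d ∧ xiOK d ξ ∧
    (∀ j, j < m - 1 → M0 j = CEntry.delta) ∧ M0 (m - 1) = CEntry.mu ∧
    (∀ j, m ≤ j → M0 j = ξ) ∧
    (∀ j, j < l - 1 → M1 j = CEntry.delta) ∧ M1 (l - 1) = CEntry.mu ∧
    (∀ j, l ≤ j → M1 j = ξ)

/-- Row type RT8 for a row `q ≥ 2`: all entries `Δ`. -/
def RT8 (Mq : ℕ → CEntry) : Prop := ∀ i, Mq i = CEntry.delta

/-- Row type RT9 for a row `q ≥ 2`. -/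
def RT9 (q : ℕ) (Θq : ℕ → ℕ → Prop) (Mq : ℕ → CEntry) : Prop :=
  ∃ (i k : ℕ) (Ns : ℕ → Subgroup (Equiv.Perm (Fin q))),
    i ≤ k ∧ leMin k Θq ∧
    (∀ j, i ≤ j → j ≤ k → Ns j ≠ ⊥ ∧ (Ns j).Normal) ∧
    (∀ j j', i ≤ j → j ≤ j' → j' ≤ k → Ns j ≤ Ns j') ∧
    (∀ j, j < i → Mq j = CEntry.delta) ∧
    (∀ j, i ≤ j → j < k → Mq j = CEntry.nsym q (Ns j)) ∧
    (∀ j, k ≤ j → Mq j = CEntry.nsym q (Ns k))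

/-- Row type RT10 for a row `q ≥ 2`. -/
def RT10 (q : ℕ) (Θq : ℕ → ℕ → Prop) (Mq : ℕ → CEntry) : Prop :=
  ∃ (i m : ℕ) (Ns : ℕ → Subgroup (Equiv.Perm (Fin q))),
    i ≤ m ∧ Θq = natCong m 1 ∧
    (∀ j, i ≤ j → j < m → Ns j ≠ ⊥ ∧ (Ns j).Normal) ∧
    (∀ j j', i ≤ j → j ≤ j' → j' < m → Ns j ≤ Ns j') ∧
    (∀ j, j < i → Mq j = CEntry.delta) ∧
    (∀ j, i ≤ j → j < m → Mq j = CEntry.nsym q (Ns j)) ∧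
    (∀ j, m ≤ j → Mq j = CEntry.R)

/-- A C-pair for `P_n^Φ`: a descending chain `Θ = (θ_0 ⊇ ⋯ ⊇ θ_n)` of congruences on
`(ℕ,+)` together with a matrix `M = (M_{qi})`, `0 ≤ q ≤ n`, `i ∈ ℕ`, whose rows 0 and 1
jointly have one of the types RT1–RT7, whose rows `q ≥ 2` have one of the types RT8–RT10,
and which satisfies the verticality conditions (V1) and (V2). -/
def IsCPair (n : ℕ) (Θ : ℕ → ℕ → ℕ → Prop) (M : ℕ → ℕ → CEntry) : Prop :=
  (∀ q, q ≤ n → IsCongruence (· + ·) (Θ q)) ∧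
  (∀ q r, q ≤ r → r ≤ n → ∀ i j, Θ r i j → Θ q i j) ∧
  (RT1 (M 0) (M 1) ∨ RT2 (Θ 0) (Θ 1) (M 0) (M 1) ∨ RT3 (Θ 0) (M 0) (M 1) ∨
    RT4 (Θ 0) (Θ 1) (M 0) (M 1) ∨ RT5 (Θ 0) (Θ 1) (M 0) (M 1) ∨
    RT6 (Θ 0) (Θ 1) (M 0) (M 1) ∨ RT7 (Θ 0) (Θ 1) (M 0) (M 1)) ∧
  (∀ q, 2 ≤ q → q ≤ n → (RT8 (M q) ∨ RT9 q (Θ q) (M q) ∨ RT10 q (Θ q) (M q))) ∧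
  (∀ q i, 1 ≤ q → q ≤ n → isNsym (M q i) →
    ¬(M (q - 1) i = CEntry.delta ∨ M (q - 1) i = CEntry.muUp ∨
      M (q - 1) i = CEntry.muDown ∨ isNsym (M (q - 1) i))) ∧
  (∀ q i, 2 ≤ q → q ≤ n → M q i = CEntry.R → M (q - 1) i = CEntry.R)

/-- The relation `cg(Θ,M)` on `P_n^Φ` associated with a C-pair `(Θ,M)`: conditions
(C1)–(C8). -/
def cg (n : ℕ) (Θ : ℕ → ℕ → ℕ → Prop) (M : ℕ → ℕ → CEntry)
    (a b : ℕ × PM n) : Prop :=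
  -- (C1)
  (M (rnk a.2) a.1 = CEntry.delta ∧ M (rnk b.2) b.1 = CEntry.delta ∧
    Θ (rnk a.2) a.1 b.1 ∧ a.2 = b.2) ∨
  -- (C2)
  (M (rnk a.2) a.1 = CEntry.R ∧ M (rnk b.2) b.1 = CEntry.R) ∨
  -- (C3)
  (∃ p N, M (rnk a.2) a.1 = CEntry.nsym p N ∧ M (rnk b.2) b.1 = CEntry.nsym p N ∧
    Θ (rnk a.2) a.1 b.1 ∧ rnk a.2 = p ∧ greenH pmul a.2 b.2 ∧ pdIn p (· ∈ N) a.2 b.2) ∨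
  -- (C4)
  (M (rnk a.2) a.1 = CEntry.lam ∧ M (rnk b.2) b.1 = CEntry.lam ∧
    greenL pmul (hat a.2) (hat b.2)) ∨
  -- (C5)
  (M (rnk a.2) a.1 = CEntry.rho ∧ M (rnk b.2) b.1 = CEntry.rho ∧
    greenR pmul (hat a.2) (hat b.2)) ∨
  -- (C6)
  (M (rnk a.2) a.1 = CEntry.muDown ∧ M (rnk b.2) b.1 = CEntry.muDown ∧
    hat a.2 = hat b.2 ∧ greenL pmul a.2 b.2) ∨
  -- (C7)
  (M (rnk a.2) a.1 = CEntry.muUp ∧ M (rnk b.2) b.1 = CEntry.muUp ∧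
    hat a.2 = hat b.2 ∧ greenR pmul a.2 b.2) ∨
  -- (C8)
  (M (rnk a.2) a.1 = CEntry.mu ∧ M (rnk b.2) b.1 = CEntry.mu ∧
    hat a.2 = hat b.2 ∧
    ((rnk a.2 = rnk b.2 ∧ Θ (rnk a.2) a.1 b.1) ∨
     (rnk a.2 ≠ rnk b.2 ∧ Θ 0 (a.1 + rnk b.2) (b.1 + rnk a.2) ∧
        ¬ minLE (Θ (rnk a.2)) a.1 ∧ ¬ minLE (Θ (rnk b.2)) b.1) ∨
     (rnk a.2 ≠ rnk b.2 ∧ Θ 0 (a.1 + rnk b.2) (b.1 + rnk a.2) ∧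
        minLE (Θ (rnk a.2)) a.1 ∧ minLE (Θ (rnk b.2)) b.1)))

/-- The C-pair `(Θ,M)` is exceptional with exceptional row `q`, where
`θ_q = (m, m+2d)^♯`. -/
def ExcAt (n : ℕ) (Θ : ℕ → ℕ → ℕ → Prop) (M : ℕ → ℕ → CEntry) (q m d : ℕ) : Prop :=
  2 ≤ q ∧ q ≤ n ∧ 1 ≤ d ∧ Θ q = natCong m (2 * d) ∧
  ((2 < q ∧ M q m = CEntry.nsym q (alternatingGroup (Fin q))) ∨
   (q = 2 ∧ M 2 m = CEntry.delta ∧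
     (M 1 m = CEntry.mu ∨ M 1 m = CEntry.rho ∨ M 1 m = CEntry.lam ∨ M 1 m = CEntry.R) ∧
     (∀ i j, natCong m d i j → Θ 1 i j)))

/-- The exceptional congruence `cgx(Θ,M)` associated with an exceptional C-pair:
`cg(Θ,M)` together with the pairs of (C9). -/
def cgx (n : ℕ) (Θ : ℕ → ℕ → ℕ → Prop) (M : ℕ → ℕ → CEntry) (q m d : ℕ)
    (a b : ℕ × PM n) : Prop :=
  cg n Θ M a b ∨
  (rnk a.2 = q ∧ rnk b.2 = q ∧ natCong m d a.1 b.1 ∧ ¬ Θ q a.1 b.1 ∧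
    greenH pmul a.2 b.2 ∧ pdIn q (fun π => π ∉ alternatingGroup (Fin q)) a.2 b.2)

/-- The Rees relation of a subset `I`. -/
def rees {M : Type*} (I : Set M) (x y : M) : Prop := x = y ∨ (x ∈ I ∧ y ∈ I)

/-- A (possibly empty) ideal of `P_n^Φ`: `MIM ⊆ I`. -/
def tIdeal (n : ℕ) (I : Set (ℕ × PM n)) : Prop :=
  ∀ a b x, x ∈ I → tmul (tmul a x) b ∈ I

/-- `I(σ)`: the union of all ideals `I` of `P_n^Φ` whose Rees congruence is contained
in `σ`. -/
def Isig (n : ℕ) (σ : (ℕ × PM n) → (ℕ × PM n) → Prop) : Set (ℕ × PM n) :=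
  ⋃₀ {I | tIdeal n I ∧ ∀ x y, rees I x y → σ x y}

/-- The 0-twisted partition monoid `P_{n,0}^Φ`, carried by `Option (P_n)` with
`none` the zero element `✗`. -/
noncomputable def mul0 (a b : Option (PM n)) : Option (PM n) :=
  match a, b with
  | some α, some β => if Phi α β = 0 then some (pmul α β) else none
  | _, _ => none

/-- `rank a ≤ q`, where `rank ✗ = -∞`. -/
def rnkLE (a : Option (PM n)) (q : ℕ) : Prop :=
  ∀ α, a = some α → rnk α ≤ q

/-- The Rees congruence `R_q` on `P_{n,0}^Φ`. -/
def ReesQ (q : ℕ) (a b : Option (PM n)) : Prop :=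
  a = b ∨ (rnkLE a q ∧ rnkLE b q)

/-- Lift a relation on `P_n` to `P_{n,0}^Φ = P_n ∪ {✗}`. -/
def lift2 (r : PM n → PM n → Prop) (a b : Option (PM n)) : Prop :=
  ∃ α β, a = some α ∧ b = some β ∧ r α β



/-! ### Auxiliary development -/

section Aux

open Classical

variable {n : ℕ}

/-- The kernel setoid of a function. -/
def kerS {T : Type} (f : V n → T) : PM n :=
  ⟨fun x y => f x = f y, ⟨fun _ => rfl, Eq.symm, Eq.trans⟩⟩

lemma conn_mono {α β : PM n} {T : Type} (G : W n → T)
    (h : ∀ x y, graphRel α β x y → G x = G y) :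
    ∀ {p r : W n}, conn α β p r → G p = G r := by
  intro p r hpr
  induction hpr with
  | rel x y hxy => exact h x y hxy
  | refl => rfl
  | symm _ _ _ ih => exact ih.symm
  | trans _ _ _ _ _ ih1 ih2 => exact ih1.trans ih2

lemma edge1 {α β : PM n} {x y : V n} (h : α.r x y) :
    conn α β (topMid x) (topMid y) :=
  Relation.EqvGen.rel _ _ (Or.inl ⟨x, y, h, rfl, rfl⟩)

lemma edge2 {α β : PM n} {x y : V n} (h : β.r x y) :
    conn α β (midBot x) (midBot y) :=
  Relation.EqvGen.rel _ _ (Or.inr ⟨x, y, h, rfl, rfl⟩)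

lemma edge1_ll {α β : PM n} {i j : Fin n} (h : α.r (Sum.inl i) (Sum.inl j)) :
    conn α β (Sum.inl i) (Sum.inl j) := edge1 h

lemma edge1_lr {α β : PM n} {i j : Fin n} (h : α.r (Sum.inl i) (Sum.inr j)) :
    conn α β (Sum.inl i) (Sum.inr (Sum.inl j)) := edge1 h

lemma edge1_rr {α β : PM n} {i j : Fin n} (h : α.r (Sum.inr i) (Sum.inr j)) :
    conn α β (Sum.inr (Sum.inl i)) (Sum.inr (Sum.inl j)) := edge1 h

lemma edge2_ll {α β : PM n} {i j : Fin n} (h : β.r (Sum.inl i) (Sum.inl j)) :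
    conn α β (Sum.inr (Sum.inl i)) (Sum.inr (Sum.inl j)) := edge2 h

lemma edge2_lr {α β : PM n} {i j : Fin n} (h : β.r (Sum.inl i) (Sum.inr j)) :
    conn α β (Sum.inr (Sum.inl i)) (Sum.inr (Sum.inr j)) := edge2 h

lemma edge2_rr {α β : PM n} {i j : Fin n} (h : β.r (Sum.inr i) (Sum.inr j)) :
    conn α β (Sum.inr (Sum.inr i)) (Sum.inr (Sum.inr j)) := edge2 h

lemma not_isMid_top (i : Fin n) : ¬ isMid (Sum.inl i : W n) := by
  rintro ⟨j, h⟩; exact absurd h (by simp)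

lemma not_isMid_bot (i : Fin n) : ¬ isMid (Sum.inr (Sum.inr i) : W n) := by
  rintro ⟨j, h⟩; exact absurd h (by simp)

lemma phi_eq_zero {α β : PM n}
    (h : ∀ j : Fin n, ∃ x : W n, ¬ isMid x ∧ conn α β (Sum.inr (Sum.inl j)) x) :
    Phi α β = 0 := by
  have : IsEmpty {c : Quotient (connSetoid α β) //
      ∀ x : W n, Quotient.mk (connSetoid α β) x = c → isMid x} := by
    constructor
    rintro ⟨c, hc⟩
    obtain ⟨w, rfl⟩ := Quotient.exists_rep c
    obtain ⟨j, rfl⟩ := hc w rfl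
    obtain ⟨x, hx, hconn⟩ := h j
    exact hx (hc x (Quotient.sound (Relation.EqvGen.symm _ _ hconn)))
  show Nat.card _ = 0
  exact Nat.card_of_isEmpty

/-- The identity partition. -/
def idp : PM n := kerS (Sum.elim (fun i => i) (fun i => i))

lemma pmul_idp_left (α : PM n) : pmul idp α = α := by
  apply Setoid.ext
  intro x y
  constructor
  · intro h
    have key := conn_mono
      (fun w => Quotient.mk α ((Sum.elim Sum.inl (Sum.elim Sum.inl Sum.inr) : W n → V n) w))
      ?_ h
    · have e : ∀ z : V n,
          (Sum.elim Sum.inl (Sum.elim Sum.inl Sum.inr) : W n → V n) (topBot z) = z := by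
        rintro (i | i) <;> rfl
      simp only [e] at key
      exact Quotient.exact key
    · rintro p r (⟨x', y', hxy, rfl, rfl⟩ | ⟨x', y', hxy, rfl, rfl⟩)
      · cases x' <;> cases y' <;>
          exact congrArg (fun k : Fin n => Quotient.mk α (Sum.inl k)) hxy
      · have e : ∀ z : V n,
            (Sum.elim Sum.inl (Sum.elim Sum.inl Sum.inr) : W n → V n) (midBot z) = z := by
          rintro (i | i) <;> rfl
        simp only [e]
        exact Quotient.sound hxy
  · intro h
    have step : ∀ z : V n, conn (idp (n := n)) α (topBot z) (midBot z) := by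
      rintro (i | i)
      · exact edge1 (show (idp (n := n)).r (Sum.inl i) (Sum.inr i) from rfl)
      · exact Relation.EqvGen.refl _
    exact Relation.EqvGen.trans _ _ _ (step x)
      (Relation.EqvGen.trans _ _ _ (edge2 h) (Relation.EqvGen.symm _ _ (step y)))

lemma pmul_idp_right (α : PM n) : pmul α idp = α := by
  apply Setoid.ext
  intro x y
  constructor
  · intro h
    have key := conn_mono
      (fun w => Quotient.mk α ((Sum.elim Sum.inl (Sum.elim Sum.inr Sum.inr) : W n → V n) w))
      ?_ h
    · have e : ∀ z : V n,
          (Sum.elim Sum.inl (Sum.elim Sum.inr Sum.inr) : W n → V n) (topBot z) = z := by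
        rintro (i | i) <;> rfl
      simp only [e] at key
      exact Quotient.exact key
    · rintro p r (⟨x', y', hxy, rfl, rfl⟩ | ⟨x', y', hxy, rfl, rfl⟩)
      · have e : ∀ z : V n,
            (Sum.elim Sum.inl (Sum.elim Sum.inr Sum.inr) : W n → V n) (topMid z) = z := by
          rintro (i | i) <;> rfl
        simp only [e]
        exact Quotient.sound hxy
      · cases x' <;> cases y' <;>
          exact congrArg (fun k : Fin n => Quotient.mk α (Sum.inr k)) hxy
  · intro h
    have step : ∀ z : V n, conn α (idp (n := n)) (topBot z) (topMid z) := by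
      rintro (i | i)
      · exact Relation.EqvGen.refl _
      · exact Relation.EqvGen.symm _ _
          (edge2 (show (idp (n := n)).r (Sum.inl i) (Sum.inr i) from rfl))
    exact Relation.EqvGen.trans _ _ _ (step x)
      (Relation.EqvGen.trans _ _ _ (edge1 h) (Relation.EqvGen.symm _ _ (step y)))

lemma phi_idp_left (α : PM n) : Phi (idp (n := n)) α = 0 := by
  apply phi_eq_zero
  intro j
  exact ⟨Sum.inl j, not_isMid_top j, Relation.EqvGen.symm _ _
    (edge1 (show (idp (n := n)).r (Sum.inl j) (Sum.inr j) from rfl))⟩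

lemma phi_idp_right (α : PM n) : Phi α (idp (n := n)) = 0 := by
  apply phi_eq_zero
  intro j
  exact ⟨Sum.inr (Sum.inr j), not_isMid_bot j,
    edge2 (show (idp (n := n)).r (Sum.inl j) (Sum.inr j) from rfl)⟩

/-- The canonical rank-`q` partition. -/
def canon (q : ℕ) : PM n :=
  kerS (fun x => match x with
    | Sum.inl i => if i.val < q then (Sum.inl i : Fin n ⊕ V n) else Sum.inr (Sum.inl i)
    | Sum.inr i => if i.val < q then (Sum.inl i : Fin n ⊕ V n) else Sum.inr (Sum.inr i))

lemma rnk_canon {q : ℕ} (hq : q ≤ n) : rnk (canon (n := n) q) = q := by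
  have e : Fin q ≃ {c : Quotient (canon (n := n) q) //
      (∃ i : Fin n, Quotient.mk (canon (n := n) q) (Sum.inl i) = c) ∧
      ∃ i : Fin n, Quotient.mk (canon (n := n) q) (Sum.inr i) = c} := by
    refine Equiv.ofBijective
      (fun s => ⟨Quotient.mk (canon (n := n) q) (Sum.inl (Fin.castLE hq s)),
        ⟨Fin.castLE hq s, rfl⟩, ⟨Fin.castLE hq s, Quotient.sound ?_⟩⟩) ⟨?_, ?_⟩
    · show (canon (n := n) q).r (Sum.inr (Fin.castLE hq s)) (Sum.inl (Fin.castLE hq s))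
      show (if ((Fin.castLE hq s : Fin n) : ℕ) < q
          then (Sum.inl (Fin.castLE hq s) : Fin n ⊕ V n) else Sum.inr (Sum.inr (Fin.castLE hq s))) =
          (if ((Fin.castLE hq s : Fin n) : ℕ) < q
          then (Sum.inl (Fin.castLE hq s) : Fin n ⊕ V n) else Sum.inr (Sum.inl (Fin.castLE hq s)))
      rw [if_pos (show ((Fin.castLE hq s : Fin n) : ℕ) < q from s.isLt),
        if_pos (show ((Fin.castLE hq s : Fin n) : ℕ) < q from s.isLt)]
    · intro s t hst
      have h1 : Quotient.mk (canon (n := n) q) (Sum.inl (Fin.castLE hq s)) =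
          Quotient.mk (canon (n := n) q) (Sum.inl (Fin.castLE hq t)) :=
        congrArg Subtype.val hst
      have h2 := Quotient.exact h1
      have h3 : (if ((Fin.castLE hq s : Fin n) : ℕ) < q
          then (Sum.inl (Fin.castLE hq s) : Fin n ⊕ V n) else Sum.inr (Sum.inl (Fin.castLE hq s))) =
          (if ((Fin.castLE hq t : Fin n) : ℕ) < q
          then (Sum.inl (Fin.castLE hq t) : Fin n ⊕ V n) else Sum.inr (Sum.inl (Fin.castLE hq t))) := h2
      rw [if_pos (show ((Fin.castLE hq s : Fin n) : ℕ) < q from s.isLt),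
        if_pos (show ((Fin.castLE hq t : Fin n) : ℕ) < q from t.isLt)] at h3
      have : (Fin.castLE hq s : Fin n) = Fin.castLE hq t := by
        injection h3
      exact Fin.castLE_injective hq this
    · rintro ⟨c, ⟨i, hi⟩, ⟨j, hj⟩⟩
      have h1 : Quotient.mk (canon (n := n) q) (Sum.inl i) =
          Quotient.mk (canon (n := n) q) (Sum.inr j) := hi.trans hj.symm
      have h2 : (if (i : ℕ) < q then (Sum.inl i : Fin n ⊕ V n) else Sum.inr (Sum.inl i)) =
          (if (j : ℕ) < q then (Sum.inl j : Fin n ⊕ V n) else Sum.inr (Sum.inr j)) :=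
        Quotient.exact h1
      by_cases hiq : (i : ℕ) < q
      · by_cases hjq : (j : ℕ) < q
        · rw [if_pos hiq, if_pos hjq] at h2
          refine ⟨⟨(i : ℕ), hiq⟩, Subtype.ext ?_⟩
          show Quotient.mk _ (Sum.inl (Fin.castLE hq ⟨(i : ℕ), hiq⟩)) = c
          have : (Fin.castLE hq ⟨(i : ℕ), hiq⟩ : Fin n) = i := Fin.ext rfl
          rw [this]; exact hi
        · rw [if_pos hiq, if_neg hjq] at h2; exact absurd h2 (by simp)
      · by_cases hjq : (j : ℕ) < q
        · rw [if_neg hiq, if_pos hjq] at h2; exact absurd h2 (by simp)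
        · rw [if_neg hiq, if_neg hjq] at h2; exact absurd h2 (by simp)
  show Nat.card _ = q
  rw [Nat.card_congr e.symm, Nat.card_eq_fintype_card, Fintype.card_fin]

lemma exists_reps (α : PM n) {q : ℕ} (h : q ≤ rnk α) :
    ∃ a b : Fin q → Fin n,
      (∀ s, α.r (Sum.inl (a s)) (Sum.inr (b s))) ∧
      (∀ s t, α.r (Sum.inl (a s)) (Sum.inl (a t)) → s = t) := by
  have e : Fin (rnk α) ≃ {c : Quotient α //
      (∃ i : Fin n, Quotient.mk α (Sum.inl i) = c) ∧
      ∃ i : Fin n, Quotient.mk α (Sum.inr i) = c} :=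
    (Finite.equivFinOfCardEq (rfl : Nat.card _ = rnk α)).symm
  refine ⟨fun s => (e (Fin.castLE h s)).2.1.choose,
    fun s => (e (Fin.castLE h s)).2.2.choose, fun s => ?_, fun s t hst => ?_⟩
  · exact Quotient.exact
      ((e (Fin.castLE h s)).2.1.choose_spec.trans (e (Fin.castLE h s)).2.2.choose_spec.symm)
  · have h1 : (e (Fin.castLE h s)).1 = (e (Fin.castLE h t)).1 :=
      (e (Fin.castLE h s)).2.1.choose_spec.symm.trans
        ((Quotient.sound hst).trans (e (Fin.castLE h t)).2.1.choose_spec)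
    have h2 : Fin.castLE h s = Fin.castLE h t := e.injective (Subtype.ext h1)
    exact Fin.castLE_injective h h2

lemma exists_reps_surj (β : PM n) {q : ℕ} (h : rnk β = q) :
    ∃ u v : Fin q → Fin n,
      (∀ s, β.r (Sum.inl (u s)) (Sum.inr (v s))) ∧
      (∀ s t, β.r (Sum.inl (u s)) (Sum.inl (u t)) → s = t) ∧
      (∀ i j, β.r (Sum.inl i) (Sum.inr j) → ∃ s, β.r (Sum.inl i) (Sum.inl (u s))) := by
  have e : Fin q ≃ {c : Quotient β //
      (∃ i : Fin n, Quotient.mk β (Sum.inl i) = c) ∧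
      ∃ i : Fin n, Quotient.mk β (Sum.inr i) = c} :=
    (Finite.equivFinOfCardEq (h ▸ rfl : Nat.card _ = q)).symm
  refine ⟨fun s => (e s).2.1.choose, fun s => (e s).2.2.choose, fun s => ?_,
    fun s t hst => ?_, fun i j hij => ?_⟩
  · exact Quotient.exact ((e s).2.1.choose_spec.trans (e s).2.2.choose_spec.symm)
  · have h1 : (e s).1 = (e t).1 :=
      (e s).2.1.choose_spec.symm.trans ((Quotient.sound hst).trans (e t).2.1.choose_spec)
    exact e.injective (Subtype.ext h1)
  · obtain ⟨s, hs⟩ := e.surjective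
      ⟨Quotient.mk β (Sum.inl i), ⟨i, rfl⟩, ⟨j, Quotient.sound (β.iseqv.symm hij)⟩⟩
    have h1 : Quotient.mk β (Sum.inl ((e s).2.1.choose)) = Quotient.mk β (Sum.inl i) := by
      rw [(e s).2.1.choose_spec, hs]
    exact ⟨s, β.iseqv.symm (Quotient.exact h1)⟩

end Aux


/-! ### The transport construction -/

section Core

open Classical

variable {n q : ℕ}

/-- `k` (a lower point of `α`) lies in one of the chosen transversals. -/
def chL (α : PM n) (a : Fin q → Fin n) (k : Fin n) : Prop :=
  ∃ s, α.r (Sum.inr k) (Sum.inl (a s))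

/-- `j` (an upper point of `α`) lies in one of the chosen transversals. -/
def chU (α : PM n) (a : Fin q → Fin n) (j : Fin n) : Prop :=
  ∃ s, α.r (Sum.inl j) (Sum.inl (a s))

/-- The block of `j` in `α` is an upper nontransversal block. -/
def NTup (α : PM n) (j : Fin n) : Prop := ∀ k, ¬ α.r (Sum.inl j) (Sum.inr k)

noncomputable def ancU (u : Fin q → Fin n) (w0 : Fin n) : Fin n :=
  if h : 0 < q then u ⟨0, h⟩ else w0

noncomputable def ancL (v : Fin q → Fin n) (w0 : Fin n) : Fin n :=
  if h : 0 < q then v ⟨0, h⟩ else w0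

open Classical in
noncomputable def gmap (α β : PM n) (a u : Fin q → Fin n) (w0 : Fin n) :
    V n → Quotient β ⊕ Fin n
  | Sum.inl i => Sum.inl (Quotient.mk β (Sum.inl i))
  | Sum.inr j =>
    if h : chU α a j then Sum.inl (Quotient.mk β (Sum.inl (u h.choose)))
    else if NTup α j then Sum.inl (Quotient.mk β (Sum.inl (ancU u w0)))
    else Sum.inr j

open Classical in
noncomputable def F0 (α β : PM n) (a u : Fin q → Fin n) :
    V n → Quotient β ⊕ Quotient α
  | Sum.inl i => Sum.inl (Quotient.mk β (Sum.inl i))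
  | Sum.inr k =>
    if h : chL α a k then Sum.inl (Quotient.mk β (Sum.inl (u h.choose)))
    else Sum.inr (Quotient.mk α (Sum.inr k))

open Classical in
noncomputable def hm (α β : PM n) (a v : Fin q → Fin n) (w0 : Fin n) :
    V n → Quotient β
  | Sum.inl j =>
    if h : chL α a j then Quotient.mk β (Sum.inr (v h.choose))
    else Quotient.mk β (Sum.inr (ancL v w0))
  | Sum.inr i => Quotient.mk β (Sum.inr i)

open Classical in
noncomputable def G1 (α β : PM n) (a u : Fin q → Fin n) (w0 : Fin n) :
    W n → Quotient β ⊕ Quotient α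
  | Sum.inl i => Sum.inl (Quotient.mk β (Sum.inl i))
  | Sum.inr (Sum.inl j) =>
    if h : chU α a j then Sum.inl (Quotient.mk β (Sum.inl (u h.choose)))
    else if NTup α j then Sum.inl (Quotient.mk β (Sum.inl (ancU u w0)))
    else Sum.inr (Quotient.mk α (Sum.inl j))
  | Sum.inr (Sum.inr k) => F0 α β a u (Sum.inr k)

open Classical in
noncomputable def G2 (α β : PM n) (a u v : Fin q → Fin n) (w0 : Fin n) :
    W n → Quotient β
  | Sum.inl i => Quotient.mk β (Sum.inl i)
  | Sum.inr (Sum.inl j) =>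
    if h : chL α a j then Quotient.mk β (Sum.inl (u h.choose))
    else Quotient.mk β (Sum.inr (ancL v w0))
  | Sum.inr (Sum.inr k) => Quotient.mk β (Sum.inr k)

lemma chU_choose {α : PM n} {a : Fin q → Fin n}
    (ha' : ∀ s t, α.r (Sum.inl (a s)) (Sum.inl (a t)) → s = t)
    {j : Fin n} (h : chU α a j) {s : Fin q} (hs : α.r (Sum.inl j) (Sum.inl (a s))) :
    h.choose = s :=
  ha' _ _ (α.iseqv.trans (α.iseqv.symm h.choose_spec) hs)

lemma chL_choose {α : PM n} {a : Fin q → Fin n}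
    (ha' : ∀ s t, α.r (Sum.inl (a s)) (Sum.inl (a t)) → s = t)
    {k : Fin n} (h : chL α a k) {s : Fin q} (hs : α.r (Sum.inr k) (Sum.inl (a s))) :
    h.choose = s :=
  ha' _ _ (α.iseqv.trans (α.iseqv.symm h.choose_spec) hs)

lemma phi_gmap {α β : PM n} {a b u : Fin q → Fin n} {w0 : Fin n}
    (ha : ∀ s, α.r (Sum.inl (a s)) (Sum.inr (b s))) :
    Phi (kerS (gmap α β a u w0)) α = 0 := by
  apply phi_eq_zero
  intro j
  by_cases h1 : chU α a j
  · exact ⟨Sum.inr (Sum.inr (b h1.choose)), not_isMid_bot _,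
      edge2_lr (α.iseqv.trans h1.choose_spec (ha _))⟩
  · by_cases h2 : NTup α j
    · refine ⟨Sum.inl (ancU u w0), not_isMid_top _, Relation.EqvGen.symm _ _ ?_⟩
      refine edge1_lr (show (kerS (gmap α β a u w0)).r
        (Sum.inl (ancU u w0)) (Sum.inr j) from ?_)
      show gmap α β a u w0 (Sum.inl (ancU u w0)) = gmap α β a u w0 (Sum.inr j)
      simp only [gmap]
      rw [dif_neg h1, if_pos h2]
    · simp only [NTup, not_forall, not_not] at h2
      obtain ⟨k, hk⟩ := h2
      exact ⟨Sum.inr (Sum.inr k), not_isMid_bot _, edge2_lr hk⟩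

lemma pmul_gmap {α β : PM n} {a b u : Fin q → Fin n} {w0 : Fin n}
    (ha : ∀ s, α.r (Sum.inl (a s)) (Sum.inr (b s)))
    (ha' : ∀ s t, α.r (Sum.inl (a s)) (Sum.inl (a t)) → s = t)
    (hu' : ∀ s t, β.r (Sum.inl (u s)) (Sum.inl (u t)) → s = t) :
    pmul (kerS (gmap α β a u w0)) α = kerS (F0 α β a u) := by
  apply Setoid.ext
  intro x y
  constructor
  · intro h
    have key := conn_mono (G1 α β a u w0) ?_ h
    · show F0 α β a u x = F0 α β a u y
      cases x <;> cases y <;> exact key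
    · rintro p r (⟨x', y', hxy, rfl, rfl⟩ | ⟨x', y', hxy, rfl, rfl⟩)
      · -- γ-edge
        have hxy' : gmap α β a u w0 x' = gmap α β a u w0 y' := hxy
        have tt : ∀ (i i' : Fin n),
            gmap α β a u w0 (Sum.inl i) = gmap α β a u w0 (Sum.inl i') →
            G1 α β a u w0 (Sum.inl i) = G1 α β a u w0 (Sum.inl i') := by
          intro i i' hij
          simp only [gmap] at hij
          simp only [G1]
          exact congrArg Sum.inl (Sum.inl_injective hij)
        have tg : ∀ (i j : Fin n),
            gmap α β a u w0 (Sum.inl i) = gmap α β a u w0 (Sum.inr j) →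
            G1 α β a u w0 (Sum.inl i) = G1 α β a u w0 (Sum.inr (Sum.inl j)) := by
          intro i j hij
          simp only [gmap] at hij
          by_cases h1 : chU α a j
          · rw [dif_pos h1] at hij
            simp only [G1, dif_pos h1]
            exact congrArg Sum.inl (Sum.inl_injective hij)
          · by_cases h2 : NTup α j
            · rw [dif_neg h1, if_pos h2] at hij
              simp only [G1, dif_neg h1, if_pos h2]
              exact congrArg Sum.inl (Sum.inl_injective hij)
            · rw [dif_neg h1, if_neg h2] at hij
              cases hij
        have gg : ∀ (j j' : Fin n),
            gmap α β a u w0 (Sum.inr j) = gmap α β a u w0 (Sum.inr j') →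
            G1 α β a u w0 (Sum.inr (Sum.inl j)) = G1 α β a u w0 (Sum.inr (Sum.inl j')) := by
          intro j j' hij
          simp only [gmap] at hij
          simp only [G1]
          split_ifs at hij ⊢ <;>
            first
              | rfl
              | exact congrArg Sum.inl (Sum.inl_injective hij)
              | (have hh := Sum.inr_injective hij; subst hh; rfl)
              | cases hij
        cases x' with
        | inl i =>
          cases y' with
          | inl i' => exact tt i i' hxy'
          | inr j => exact tg i j hxy'
        | inr j =>
          cases y' with
          | inl i => exact (tg i j hxy'.symm).symm
          | inr j' => exact gg j j' hxy'
      · -- α-edge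
        have mm : ∀ (j j' : Fin n), α.r (Sum.inl j) (Sum.inl j') →
            G1 α β a u w0 (Sum.inr (Sum.inl j)) = G1 α β a u w0 (Sum.inr (Sum.inl j')) := by
          intro j j' hr
          by_cases h1 : chU α a j
          · have h1' : chU α a j' :=
              ⟨h1.choose, α.iseqv.trans (α.iseqv.symm hr) h1.choose_spec⟩
            have hc : h1'.choose = h1.choose :=
              chU_choose ha' h1' (α.iseqv.trans (α.iseqv.symm hr) h1.choose_spec)
            simp only [G1, dif_pos h1, dif_pos h1', hc]
          · have h1' : ¬ chU α a j' :=
              fun hh => h1 ⟨hh.choose, α.iseqv.trans hr hh.choose_spec⟩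
            by_cases h2 : NTup α j
            · have h2' : NTup α j' := fun k hk => h2 k (α.iseqv.trans hr hk)
              simp only [G1, dif_neg h1, dif_neg h1', if_pos h2, if_pos h2']
            · have h2' : ¬ NTup α j' :=
                fun hh => h2 (fun k hk => hh k (α.iseqv.trans (α.iseqv.symm hr) hk))
              simp only [G1, dif_neg h1, dif_neg h1', if_neg h2, if_neg h2']
              exact congrArg Sum.inr (Quotient.sound hr)
        have mb : ∀ (j k : Fin n), α.r (Sum.inl j) (Sum.inr k) →
            G1 α β a u w0 (Sum.inr (Sum.inl j)) = G1 α β a u w0 (Sum.inr (Sum.inr k)) := by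
          intro j k hr
          by_cases h1 : chU α a j
          · have h1' : chL α a k :=
              ⟨h1.choose, α.iseqv.trans (α.iseqv.symm hr) h1.choose_spec⟩
            have hc : h1'.choose = h1.choose :=
              chL_choose ha' h1' (α.iseqv.trans (α.iseqv.symm hr) h1.choose_spec)
            simp only [G1, F0, dif_pos h1, dif_pos h1', hc]
          · have h1' : ¬ chL α a k :=
              fun hh => h1 ⟨hh.choose, α.iseqv.trans hr hh.choose_spec⟩
            have h2 : ¬ NTup α j := fun hh => hh k hr
            simp only [G1, F0, dif_neg h1, dif_neg h1', if_neg h2]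
            exact congrArg Sum.inr (Quotient.sound hr)
        have bb : ∀ (k k' : Fin n), α.r (Sum.inr k) (Sum.inr k') →
            G1 α β a u w0 (Sum.inr (Sum.inr k)) = G1 α β a u w0 (Sum.inr (Sum.inr k')) := by
          intro k k' hr
          by_cases h1 : chL α a k
          · have h1' : chL α a k' :=
              ⟨h1.choose, α.iseqv.trans (α.iseqv.symm hr) h1.choose_spec⟩
            have hc : h1'.choose = h1.choose :=
              chL_choose ha' h1' (α.iseqv.trans (α.iseqv.symm hr) h1.choose_spec)
            simp only [G1, F0, dif_pos h1, dif_pos h1', hc]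
          · have h1' : ¬ chL α a k' :=
              fun hh => h1 ⟨hh.choose, α.iseqv.trans hr hh.choose_spec⟩
            simp only [G1, F0, dif_neg h1, dif_neg h1']
            exact congrArg Sum.inr (Quotient.sound hr)
        cases x' with
        | inl j =>
          cases y' with
          | inl j' => exact mm j j' hxy
          | inr k => exact mb j k hxy
        | inr k =>
          cases y' with
          | inl j => exact (mb j k (α.iseqv.symm hxy)).symm
          | inr k' => exact bb k k' hxy
  · intro h
    have h' : F0 α β a u x = F0 α β a u y := h
    have cross : ∀ (i k : Fin n), F0 α β a u (Sum.inl i) = F0 α β a u (Sum.inr k) →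
        conn (kerS (gmap α β a u w0)) α (Sum.inl i) (Sum.inr (Sum.inr k)) := by
      intro i k hik
      simp only [F0] at hik
      by_cases h1 : chL α a k
      · rw [dif_pos h1] at hik
        have hh := Sum.inl_injective hik
        have hcu : chU α a (a h1.choose) := ⟨h1.choose, α.iseqv.refl _⟩
        have hc : hcu.choose = h1.choose := chU_choose ha' hcu (α.iseqv.refl _)
        have e1 : conn (kerS (gmap α β a u w0)) α
            (Sum.inl i) (Sum.inr (Sum.inl (a h1.choose))) := by
          refine edge1_lr (show (kerS (gmap α β a u w0)).r
            (Sum.inl i) (Sum.inr (a h1.choose)) from ?_)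
          show gmap α β a u w0 (Sum.inl i) = gmap α β a u w0 (Sum.inr (a h1.choose))
          simp only [gmap, dif_pos hcu, hc]
          exact congrArg Sum.inl hh
        have e2 : conn (kerS (gmap α β a u w0)) α
            (Sum.inr (Sum.inl (a h1.choose))) (Sum.inr (Sum.inr k)) :=
          edge2_lr (α.iseqv.symm h1.choose_spec)
        exact Relation.EqvGen.trans _ _ _ e1 e2
      · rw [dif_neg h1] at hik
        cases hik
    cases x with
    | inl i =>
      cases y with
      | inl i' =>
        refine edge1_ll (show (kerS (gmap α β a u w0)).r (Sum.inl i) (Sum.inl i') from ?_)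
        show gmap α β a u w0 (Sum.inl i) = gmap α β a u w0 (Sum.inl i')
        simp only [F0] at h'
        simp only [gmap]
        exact congrArg Sum.inl (Sum.inl_injective h')
      | inr k => exact cross i k h'
    | inr k =>
      cases y with
      | inl i => exact Relation.EqvGen.symm _ _ (cross i k h'.symm)
      | inr k' =>
        simp only [F0] at h'
        by_cases h1 : chL α a k
        · by_cases h2 : chL α a k'
          · rw [dif_pos h1, dif_pos h2] at h'
            have hh := Sum.inl_injective h'
            have hcc : h1.choose = h2.choose := hu' _ _ (Quotient.exact hh)
            have hr2 : α.r (Sum.inl (a h1.choose)) (Sum.inr k') := by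
              rw [hcc]; exact α.iseqv.symm h2.choose_spec
            exact edge2_rr (α.iseqv.trans h1.choose_spec hr2)
          · rw [dif_pos h1, dif_neg h2] at h'
            cases h'
        · by_cases h2 : chL α a k'
          · rw [dif_neg h1, dif_pos h2] at h'
            cases h'
          · rw [dif_neg h1, dif_neg h2] at h'
            exact edge2_rr (Quotient.exact (Sum.inr_injective h'))

lemma phi_F0hm {α β : PM n} {a u v : Fin q → Fin n} {w0 : Fin n} :
    Phi (kerS (F0 α β a u)) (kerS (hm α β a v w0)) = 0 := by
  apply phi_eq_zero
  intro j
  by_cases h1 : chL α a j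
  · refine ⟨Sum.inl (u h1.choose), not_isMid_top _, Relation.EqvGen.symm _ _ ?_⟩
    refine edge1_lr (show (kerS (F0 α β a u)).r (Sum.inl (u h1.choose)) (Sum.inr j) from ?_)
    show F0 α β a u (Sum.inl (u h1.choose)) = F0 α β a u (Sum.inr j)
    simp only [F0, dif_pos h1]
  · refine ⟨Sum.inr (Sum.inr (ancL v w0)), not_isMid_bot _, ?_⟩
    refine edge2_lr (show (kerS (hm α β a v w0)).r (Sum.inl j) (Sum.inr (ancL v w0)) from ?_)
    show hm α β a v w0 (Sum.inl j) = hm α β a v w0 (Sum.inr (ancL v w0))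
    simp only [hm, dif_neg h1]

lemma pmul_F0hm {α β : PM n} {a b u v : Fin q → Fin n} {w0 : Fin n}
    (ha : ∀ s, α.r (Sum.inl (a s)) (Sum.inr (b s)))
    (ha' : ∀ s t, α.r (Sum.inl (a s)) (Sum.inl (a t)) → s = t)
    (hu : ∀ s, β.r (Sum.inl (u s)) (Sum.inr (v s)))
    (hus : ∀ i j, β.r (Sum.inl i) (Sum.inr j) → ∃ s, β.r (Sum.inl i) (Sum.inl (u s))) :
    pmul (kerS (F0 α β a u)) (kerS (hm α β a v w0)) = β := by
  apply Setoid.ext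
  intro x y
  constructor
  · intro h
    have key := conn_mono (G2 α β a u v w0) ?_ h
    · cases x <;> cases y <;> exact Quotient.exact key
    · rintro p r (⟨x', y', hxy, rfl, rfl⟩ | ⟨x', y', hxy, rfl, rfl⟩)
      · -- ε-edge
        have hxy' : F0 α β a u x' = F0 α β a u y' := hxy
        have tt : ∀ (i i' : Fin n), F0 α β a u (Sum.inl i) = F0 α β a u (Sum.inl i') →
            G2 α β a u v w0 (Sum.inl i) = G2 α β a u v w0 (Sum.inl i') := by
          intro i i' hik
          simp only [F0] at hik
          simp only [G2]
          exact Sum.inl_injective hik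
        have tm : ∀ (i k : Fin n), F0 α β a u (Sum.inl i) = F0 α β a u (Sum.inr k) →
            G2 α β a u v w0 (Sum.inl i) = G2 α β a u v w0 (Sum.inr (Sum.inl k)) := by
          intro i k hik
          simp only [F0] at hik
          by_cases h1 : chL α a k
          · rw [dif_pos h1] at hik
            simp only [G2, dif_pos h1]
            exact Sum.inl_injective hik
          · rw [dif_neg h1] at hik
            cases hik
        have bb : ∀ (k k' : Fin n), F0 α β a u (Sum.inr k) = F0 α β a u (Sum.inr k') →
            G2 α β a u v w0 (Sum.inr (Sum.inl k)) = G2 α β a u v w0 (Sum.inr (Sum.inl k')) := by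
          intro k k' hik
          simp only [F0] at hik
          by_cases h1 : chL α a k <;> by_cases h2 : chL α a k'
          · rw [dif_pos h1, dif_pos h2] at hik
            simp only [G2, dif_pos h1, dif_pos h2]
            exact Sum.inl_injective hik
          · rw [dif_pos h1, dif_neg h2] at hik
            cases hik
          · rw [dif_neg h1, dif_pos h2] at hik
            cases hik
          · simp only [G2, dif_neg h1, dif_neg h2]
        cases x' with
        | inl i =>
          cases y' with
          | inl i' => exact tt i i' hxy'
          | inr k => exact tm i k hxy'
        | inr k =>
          cases y' with
          | inl i => exact (tm i k hxy'.symm).symm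
          | inr k' => exact bb k k' hxy'
      · -- δ-edge
        have hxy' : hm α β a v w0 x' = hm α β a v w0 y' := hxy
        have mm : ∀ (j j' : Fin n), hm α β a v w0 (Sum.inl j) = hm α β a v w0 (Sum.inl j') →
            G2 α β a u v w0 (Sum.inr (Sum.inl j)) = G2 α β a u v w0 (Sum.inr (Sum.inl j')) := by
          intro j j' hji
          simp only [hm] at hji
          by_cases h1 : chL α a j <;> by_cases h2 : chL α a j'
          · rw [dif_pos h1, dif_pos h2] at hji
            simp only [G2, dif_pos h1, dif_pos h2]
            exact ((Quotient.sound (hu h1.choose)).trans hji).trans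
              (Quotient.sound (hu h2.choose)).symm
          · rw [dif_pos h1, dif_neg h2] at hji
            simp only [G2, dif_pos h1, dif_neg h2]
            exact (Quotient.sound (hu h1.choose)).trans hji
          · rw [dif_neg h1, dif_pos h2] at hji
            simp only [G2, dif_neg h1, dif_pos h2]
            exact hji.trans (Quotient.sound (hu h2.choose)).symm
          · rw [dif_neg h1, dif_neg h2] at hji
            simp only [G2, dif_neg h1, dif_neg h2]
        have mb : ∀ (j i : Fin n), hm α β a v w0 (Sum.inl j) = hm α β a v w0 (Sum.inr i) →
            G2 α β a u v w0 (Sum.inr (Sum.inl j)) = G2 α β a u v w0 (Sum.inr (Sum.inr i)) := by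
          intro j i hji
          simp only [hm] at hji
          by_cases h1 : chL α a j
          · rw [dif_pos h1] at hji
            simp only [G2, dif_pos h1]
            exact (Quotient.sound (hu h1.choose)).trans hji
          · rw [dif_neg h1] at hji
            simp only [G2, dif_neg h1]
            exact hji
        have bb : ∀ (i i' : Fin n), hm α β a v w0 (Sum.inr i) = hm α β a v w0 (Sum.inr i') →
            G2 α β a u v w0 (Sum.inr (Sum.inr i)) = G2 α β a u v w0 (Sum.inr (Sum.inr i')) := by
          intro i i' hji
          simp only [hm] at hji
          simp only [G2]
          exact hji
        cases x' with
        | inl j =>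
          cases y' with
          | inl j' => exact mm j j' hxy'
          | inr i => exact mb j i hxy'
        | inr i =>
          cases y' with
          | inl j => exact (mb j i hxy'.symm).symm
          | inr i' => exact bb i i' hxy'
  · intro hβr
    have cr : ∀ (i j : Fin n), β.r (Sum.inl i) (Sum.inr j) →
        conn (kerS (F0 α β a u)) (kerS (hm α β a v w0))
          (Sum.inl i) (Sum.inr (Sum.inr j)) := by
      intro i j hij
      obtain ⟨s, hs⟩ := hus i j hij
      have hbs : chL α a (b s) := ⟨s, α.iseqv.symm (ha s)⟩
      have hcs : hbs.choose = s := chL_choose ha' hbs (α.iseqv.symm (ha s))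
      have e1 : conn (kerS (F0 α β a u)) (kerS (hm α β a v w0))
          (Sum.inl i) (Sum.inr (Sum.inl (b s))) := by
        refine edge1_lr (show (kerS (F0 α β a u)).r (Sum.inl i) (Sum.inr (b s)) from ?_)
        show F0 α β a u (Sum.inl i) = F0 α β a u (Sum.inr (b s))
        simp only [F0]
        rw [dif_pos hbs, hcs]
        exact congrArg Sum.inl (Quotient.sound hs)
      have e2 : conn (kerS (F0 α β a u)) (kerS (hm α β a v w0))
          (Sum.inr (Sum.inl (b s))) (Sum.inr (Sum.inr j)) := by
        refine edge2_lr (show (kerS (hm α β a v w0)).r (Sum.inl (b s)) (Sum.inr j) from ?_)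
        show hm α β a v w0 (Sum.inl (b s)) = hm α β a v w0 (Sum.inr j)
        simp only [hm]
        rw [dif_pos hbs, hcs]
        exact Quotient.sound (β.iseqv.trans (β.iseqv.symm (hu s))
          (β.iseqv.trans (β.iseqv.symm hs) hij))
      exact Relation.EqvGen.trans _ _ _ e1 e2
    cases x with
    | inl i =>
      cases y with
      | inl i' =>
        refine edge1_ll (show (kerS (F0 α β a u)).r (Sum.inl i) (Sum.inl i') from ?_)
        show F0 α β a u (Sum.inl i) = F0 α β a u (Sum.inl i')
        simp only [F0]
        exact congrArg Sum.inl (Quotient.sound hβr)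
      | inr j => exact cr i j hβr
    | inr j =>
      cases y with
      | inl i => exact Relation.EqvGen.symm _ _ (cr i j (β.iseqv.symm hβr))
      | inr j' =>
        refine edge2_rr (show (kerS (hm α β a v w0)).r (Sum.inr j) (Sum.inr j') from ?_)
        show hm α β a v w0 (Sum.inr j) = hm α β a v w0 (Sum.inr j')
        simp only [hm]
        exact Quotient.sound hβr

lemma transport {α β : PM n} {q : ℕ} (hn : 0 < n) (hβ : rnk β = q) (hα : q ≤ rnk α) :
    ∃ γ δ : PM n, Phi γ α = 0 ∧ Phi (pmul γ α) δ = 0 ∧ pmul (pmul γ α) δ = β := by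
  obtain ⟨a, b, ha, ha'⟩ := exists_reps α hα
  obtain ⟨u, v, hu, hu', hus⟩ := exists_reps_surj β hβ
  refine ⟨kerS (gmap α β a u ⟨0, hn⟩), kerS (hm α β a v ⟨0, hn⟩),
    phi_gmap ha, ?_, ?_⟩
  · rw [pmul_gmap ha ha' hu']
    exact phi_F0hm
  · rw [pmul_gmap ha ha' hu']
    exact pmul_F0hm ha ha' hu hus

end Core

/-- For a congruence `σ` on `P_n^Φ` and `θ_q` the relation
`{(i,j) : ((i,α),(j,α)) ∈ σ for some α ∈ D_q}`: the "some" and "all" versions coincide,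
each `θ_q` (for `q ≤ n`) is a congruence on `(ℕ,+)`, and `θ_0 ⊇ θ_1 ⊇ ⋯ ⊇ θ_n`. -/
theorem theta_chain (n : ℕ) (hn : 1 ≤ n)
    (σ : (ℕ × PM n) → (ℕ × PM n) → Prop) (hσ : IsCongruence (tmul (n := n)) σ)
    (θ : ℕ → ℕ → ℕ → Prop)
    (hθ : θ = fun q i j => ∃ α : PM n, rnk α = q ∧ σ (i, α) (j, α)) :
    (∀ q, q ≤ n → ∀ i j, θ q i j ↔ ∀ α : PM n, rnk α = q → σ (i, α) (j, α)) ∧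
    (∀ q, q ≤ n → IsCongruence (· + ·) (θ q)) ∧
    (∀ q r, q ≤ r → r ≤ n → ∀ i j, θ r i j → θ q i j) := by
  subst hθ
  have hn0 : 0 < n := hn
  -- transport of witnesses along ranks
  have key : ∀ (i j : ℕ) (α β : PM n), rnk β ≤ rnk α →
      σ (i, α) (j, α) → σ (i, β) (j, β) := by
    intro i j α β hr hs
    obtain ⟨γ, δ, h1, h2, h3⟩ := transport (α := α) (β := β) hn0 rfl hr
    have c1 := (hσ.2 (i, α) (j, α) (0, γ) hs).1
    have e1 : ∀ m : ℕ, tmul (0, γ) (m, α) = (m, pmul γ α) := by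
      intro m; simp [tmul, h1]
    rw [e1 i, e1 j] at c1
    have c2 := (hσ.2 (i, pmul γ α) (j, pmul γ α) (0, δ) c1).2
    have e2 : ∀ m : ℕ, tmul (m, pmul γ α) (0, δ) = (m, β) := by
      intro m; simp [tmul, h2, h3]
    rw [e2 i, e2 j] at c2
    exact c2
  refine ⟨?_, ?_, ?_⟩
  · intro q hq i j
    constructor
    · rintro ⟨α₀, h0, hs⟩ α hα
      exact key i j α₀ α (by rw [h0, hα]) hs
    · intro h
      exact ⟨canon q, rnk_canon hq, h _ (rnk_canon hq)⟩
  · intro q hq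
    constructor
    · refine ⟨fun i => ⟨canon q, rnk_canon hq, hσ.1.refl _⟩, ?_, ?_⟩
      · intro i j hij
        obtain ⟨α, hα, hs⟩ := hij
        exact ⟨α, hα, hσ.1.symm hs⟩
      · intro i j k h1 h2
        obtain ⟨α, hα, hs⟩ := h1
        obtain ⟨α', hα', hs'⟩ := h2
        exact ⟨α, hα, hσ.1.trans hs (key _ _ α' α (by rw [hα, hα']) hs')⟩
    · rintro i j c ⟨α, hα, hs⟩
      constructor
      · have hc := (hσ.2 (i, α) (j, α) (c, idp) hs).1
        have e : ∀ m : ℕ, tmul (c, idp) (m, α) = (c + m, α) := by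
          intro m
          simp [tmul, phi_idp_left, pmul_idp_left]
        rw [e i, e j] at hc
        exact ⟨α, hα, hc⟩
      · have hc := (hσ.2 (i, α) (j, α) (c, idp) hs).2
        have e : ∀ m : ℕ, tmul (m, α) (c, idp) = (m + c, α) := by
          intro m
          simp [tmul, phi_idp_right, pmul_idp_right]
        rw [e i, e j] at hc
        exact ⟨α, hα, hc⟩
  · rintro q r hqr hrn i j ⟨α, hα, hs⟩
    refine ⟨canon q, rnk_canon (hqr.trans hrn), ?_⟩
    exact key i j α (canon q) (by rw [hα, rnk_canon (hqr.trans hrn)]; exact hqr) hs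

end TPM
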